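/- Let q, p, v, vᵢ, vᵢ₊₁ ∈ ℝ² be such that vᵢ − q and vᵢ₊₁ − q are linearly independent and v lies in the cone at q spanned by vᵢ and vᵢ₊₁. Let T := convexHull ℝ {v, vᵢ, vᵢ₊₁}, and assume q ∉ T and p ∉ T. If openSegment ℝ q p meets T, then openSegment ℝ q p meets the closed segment [vᵢ, vᵢ₊₁]. (This is the geometric fact underlying the cases of Sections 3.1 and 3.2 of the paper in which the maximal cone vc_m is bounded by the rays q vᵢ and q vᵢ₊₁: any line of sight from q through the triangle v vᵢ vᵢ₊₁ must cross the segment vᵢ vᵢ₊₁.) -/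

import Mathlib

open Set

/-- Points of the plane. -/
abbrev Pt := EuclideanSpace ℝ (Fin 2)

/-- `x` is an endpoint of the (nondegenerate) closed segment `s`. -/
def IsSegEndpoint (x : Pt) (s : Set Pt) : Prop :=
  ∃ a b : Pt, a ≠ b ∧ s = segment ℝ a b ∧ (x = a ∨ x = b)

/-- An obstacle set: a finite set of nondegenerate closed segments such that any two
distinct segments intersect at most in a point that is a common endpoint of both. -/
def IsObstacleSet (E : Set (Set Pt)) : Prop :=
  E.Finite ∧
  (∀ s ∈ E, ∃ a b : Pt, a ≠ b ∧ s = segment ℝ a b) ∧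
  (∀ s ∈ E, ∀ t ∈ E, s ≠ t → ∀ x ∈ s ∩ t, IsSegEndpoint x s ∧ IsSegEndpoint x t)

/-- `V(E)`: the set of all endpoints of segments of `E`. -/
def Vset (E : Set (Set Pt)) : Set Pt := {x | ∃ s ∈ E, IsSegEndpoint x s}

/-- Two points `p ≠ q` are mutually visible with respect to `E` if the open segment
joining them is disjoint from every segment of `E`. -/
def MutuallyVisible (E : Set (Set Pt)) (p q : Pt) : Prop :=
  p ≠ q ∧ ∀ s ∈ E, openSegment ℝ p q ∩ s = ∅

/-- The cone at `q` spanned by `a` and `b`. -/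
def Cone (q a b : Pt) : Set Pt :=
  {x | ∃ s t : ℝ, 0 ≤ s ∧ 0 ≤ t ∧ x = q + s • (a - q) + t • (b - q)}

set_option maxHeartbeats 4000000 in
theorem stmt_2
    (q p v vi vi1 : Pt)
    (hli : LinearIndependent ℝ ![vi - q, vi1 - q])
    (hv : v ∈ Cone q vi vi1)
    (hq : q ∉ convexHull ℝ ({v, vi, vi1} : Set Pt))
    (hp : p ∉ convexHull ℝ ({v, vi, vi1} : Set Pt))
    (hmeet : (openSegment ℝ q p ∩ convexHull ℝ ({v, vi, vi1} : Set Pt)).Nonempty) :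
    (openSegment ℝ q p ∩ segment ℝ vi vi1).Nonempty := by
  classical
  set e1 := vi - q with he1
  set e2 := vi1 - q with he2
  have hvi : vi = q + e1 := by rw [he1]; abel
  have hvi1 : vi1 = q + e2 := by rw [he2]; abel
  -- uniqueness of coordinates
  have key : ∀ c1 c2 d1 d2 : ℝ, c1 • e1 + c2 • e2 = d1 • e1 + d2 • e2 → c1 = d1 ∧ c2 = d2 := by
    intro c1 c2 d1 d2 h
    have h0 : (c1 - d1) • e1 + (c2 - d2) • e2 = 0 := by
      rw [sub_smul, sub_smul, sub_add_sub_comm, h, sub_self]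
    obtain ⟨h1, h2⟩ := LinearIndependent.pair_iff.mp hli (c1 - d1) (c2 - d2) h0
    exact ⟨by linarith, by linarith⟩
  -- existence of coordinates
  have hcard : Fintype.card (Fin 2) = Module.finrank ℝ Pt := by
    simp [finrank_euclideanSpace_fin]
  let B : Module.Basis (Fin 2) ℝ Pt := basisOfLinearIndependentOfCardEqFinrank hli hcard
  have hB0 : B 0 = e1 := by
    simp [B, coe_basisOfLinearIndependentOfCardEqFinrank]
  have hB1 : B 1 = e2 := by
    simp [B, coe_basisOfLinearIndependentOfCardEqFinrank]
  obtain ⟨a, b, hab⟩ : ∃ a b : ℝ, p - q = a • e1 + b • e2 := by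
    refine ⟨B.repr (p - q) 0, B.repr (p - q) 1, ?_⟩
    have h := B.sum_repr (p - q)
    rw [Fin.sum_univ_two, hB0, hB1] at h
    exact h.symm
  have hp' : p = q + a • e1 + b • e2 := by
    have h2 := sub_eq_iff_eq_add.mp hab
    rw [h2]; abel
  -- cone coordinates of v
  obtain ⟨s, t, hs, ht, hveq⟩ := hv
  have hvq : v - q = s • e1 + t • e2 := by rw [hveq]; abel
  -- the meeting point
  obtain ⟨x0, hx0seg, hx0T⟩ := hmeet
  obtain ⟨α, β, hα, hβ, hαβ, hx⟩ := hx0seg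
  have hβ1 : β < 1 := by linarith
  have hx0q : x0 - q = β • (p - q) := by
    have hαv : α = 1 - β := by linarith
    rw [← hx, hαv]; module
  -- decompose x0 in the triangle
  obtain ⟨l, m, n, hl, hm, hn, hlmn, hx0tri⟩ :
      ∃ l m n : ℝ, 0 ≤ l ∧ 0 ≤ m ∧ 0 ≤ n ∧ l + m + n = 1 ∧ x0 = l • v + m • vi + n • vi1 := by
    have h1 : ({v, vi, vi1} : Set Pt) = insert v {vi, vi1} := rfl
    have hx0T' := hx0T
    rw [h1, convexHull_insert ⟨vi, by left; rfl⟩, convexHull_pair, mem_convexJoin] at hx0T'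
    obtain ⟨w, hw, z, hz, hxz⟩ := hx0T'
    rw [mem_singleton_iff] at hw
    subst hw
    obtain ⟨d1, d2, hd1, hd2, hd, hzeq⟩ := hz
    obtain ⟨c1, c2, hc1, hc2, hc, hx0'⟩ := hxz
    refine ⟨c1, c2 * d1, c2 * d2, hc1, mul_nonneg hc2 hd1, mul_nonneg hc2 hd2, by nlinarith, ?_⟩
    rw [← hx0', ← hzeq]
    module
  have hx0tri' : x0 - q = (l * s + m) • e1 + (l * t + n) • e2 := by
    have hl' : l = 1 - m - n := by linarith
    rw [hx0tri, hveq, hvi, hvi1, hl']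
    module
  -- coordinate equations
  have hco : (β * a) • e1 + (β * b) • e2 = (l * s + m) • e1 + (l * t + n) • e2 := by
    calc (β * a) • e1 + (β * b) • e2 = β • (a • e1 + b • e2) := by module
    _ = β • (p - q) := by rw [← hab]
    _ = x0 - q := hx0q.symm
    _ = (l * s + m) • e1 + (l * t + n) • e2 := hx0tri'
  obtain ⟨hA, hB⟩ := key _ _ _ _ hco
  clear hco key hB0 hB1 B hcard hab hx0q hx
  -- v ≠ q
  have hst : 0 < s + t := by
    rcases lt_or_eq_of_le (by linarith : (0:ℝ) ≤ s + t) with h | h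
    · exact h
    · exfalso
      have hs0 : s = 0 := by linarith
      have ht0 : t = 0 := by linarith
      have hvq' : v = q := by rw [hveq, hs0, ht0]; simp
      exact hq (subset_convexHull ℝ _ (by rw [← hvq']; left; rfl))
  -- positivity of the coordinate sum along the segment
  have hGeq : β * (a + b) = (1 - l) + l * (s + t) := by
    have h1 : m + n = 1 - l := by linarith
    nlinarith [hA, hB]
  have hGpos : 0 < β * (a + b) := by
    rw [hGeq]
    rcases lt_or_eq_of_le (by linarith : l ≤ 1) with h | h
    · nlinarith
    · nlinarith
  have hapos : 0 ≤ a := by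
    have h1 : 0 ≤ β * a := by rw [hA]; nlinarith [mul_nonneg hl hs]
    exact (mul_nonneg_iff_of_pos_left hβ).mp h1
  have hbpos : 0 ≤ b := by
    have h1 : 0 ≤ β * b := by rw [hB]; nlinarith [mul_nonneg hl ht]
    exact (mul_nonneg_iff_of_pos_left hβ).mp h1
  have hcpos : 0 < a + b := by
    have h1 : 0 < β * (a + b) := hGpos
    nlinarith
  -- the key step: a + b > 1
  have hcgt : 1 < a + b := by
    by_contra hle
    push_neg at hle
    set G := β * (a + b) with hGdef
    have hG0 : G ≠ 0 := ne_of_gt hGpos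
    have hGβ : G ≤ β := by nlinarith
    have hGlt1 : G < 1 := lt_of_le_of_lt hGβ hβ1
    have h1G : (1 : ℝ) - G ≠ 0 := by linarith
    obtain ⟨θ, hθ0, hθ1, hθG, hθG'⟩ :
        ∃ θ : ℝ, 0 ≤ θ ∧ θ ≤ 1 ∧ θ * G = β * a ∧ (1 - θ) * G = β * b := by
      refine ⟨β * a / G, div_nonneg (by nlinarith) hGpos.le, ?_, ?_, ?_⟩
      · rw [div_le_one hGpos]
        nlinarith
      · field_simp
      · rw [hGdef]
        field_simp
        ring
    obtain ⟨r, hr0, hr1, hc1, hc2⟩ :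
        ∃ r : ℝ, 0 ≤ r ∧ r ≤ 1 ∧ (1 - r) * (β * a) + r * θ = a ∧
          (1 - r) * (β * b) + r * (1 - θ) = b := by
      have hθ : θ = β * a / G := by
        rw [eq_div_iff hG0]
        exact hθG
      have hθ' : 1 - θ = β * b / G := by
        rw [eq_div_iff hG0]
        exact hθG'
      refine ⟨G * (1 - β) / (β * (1 - G)),
        div_nonneg (mul_nonneg hGpos.le (by linarith)) (mul_nonneg hβ.le (by linarith)), ?_, ?_, ?_⟩
      · rw [div_le_one (by nlinarith)]
        nlinarith
      · rw [hθ, hGdef]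
        have h1G' : (1:ℝ) - β * (a + b) ≠ 0 := h1G
        field_simp
        ring
      · rw [hθ', hGdef]
        have h1G' : (1:ℝ) - β * (a + b) ≠ 0 := h1G
        field_simp
        ring
    set y' := θ • vi + (1 - θ) • vi1 with hy'def
    have hy'T : y' ∈ convexHull ℝ ({v, vi, vi1} : Set Pt) := by
      have hseg : y' ∈ segment ℝ vi vi1 := ⟨θ, 1 - θ, hθ0, by linarith, by ring, rfl⟩
      exact (convex_convexHull ℝ _).segment_subset
        (subset_convexHull ℝ _ (by right; left; rfl))
        (subset_convexHull ℝ _ (by right; right; rfl)) hseg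
    have hpcomb : (1 - r) • x0 + r • y' = p := by
      have hx0e : x0 = q + (l * s + m) • e1 + (l * t + n) • e2 := by
        have h2 := sub_eq_iff_eq_add.mp hx0tri'
        rw [h2]; abel
      rw [hx0e, hy'def, hvi, hvi1, hp', ← hA, ← hB]
      match_scalars
      · linear_combination -hc1 - hc2
      · linear_combination hc1
      · linear_combination hc2
    have hpT : p ∈ convexHull ℝ ({v, vi, vi1} : Set Pt) := by
      rw [← hpcomb]
      exact (convex_convexHull ℝ _) hx0T hy'T (by linarith) hr0 (by ring)
    exact hp hpT
  -- conclusion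
  set u := (a + b)⁻¹ with hu
  have hu0 : 0 < u := inv_pos.mpr hcpos
  have hu1 : u < 1 := by
    rw [hu, inv_lt_one_iff₀]
    right; exact hcgt
  refine ⟨(1 - u) • q + u • p, ⟨1 - u, u, by linarith, hu0, by ring, rfl⟩, ?_⟩
  refine ⟨a * u, b * u, mul_nonneg hapos hu0.le, mul_nonneg hbpos hu0.le, ?_, ?_⟩
  · rw [hu, ← add_mul]
    exact mul_inv_cancel₀ (ne_of_gt hcpos)
  · rw [hp', hvi, hvi1]
    match_scalars
    · rw [hu]
      field_simp
      ring
    · ring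
    · ring
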